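/- MA(Cohen), i.e., MA(Fn(κ,2)) for every cardinal κ, implies 𝔰𝔱'' = 2^{ℵ0}. -/

import Mathlib

open Cardinal Set

/-- `X` is a `𝔰𝔱_l`-family on (the canonical type of order type) `l`:
a collection of countably infinite subsets of `l` such that every subset of
cardinality `ℵ₁` contains a member of `X`. -/
def IsStickFam (l : Cardinal) (X : Set (Set l.ord.ToType)) : Prop :=
  (∀ x ∈ X, #x = ℵ₀) ∧
    ∀ y : Set l.ord.ToType, #y = aleph 1 → ∃ x ∈ X, x ⊆ y

/-- The cardinal `𝔰𝔱_l`. -/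
noncomputable def stickL (l : Cardinal) : Cardinal :=
  sInf {c | ∃ X : Set (Set l.ord.ToType), IsStickFam l X ∧ #X = c}

/-- The cardinal `𝔰𝔱` (`= 𝔰𝔱_{ℵ₁}`). -/
noncomputable def stick : Cardinal := stickL (aleph 1)

/-- The cardinal `𝔰𝔱'`: the least `κ ≥ ℵ₁` carrying a stick family of size `κ`. -/
noncomputable def stick' : Cardinal :=
  sInf {k | aleph 1 ≤ k ∧ ∃ X : Set (Set k.ord.ToType), IsStickFam k X ∧ #X = k}
/-- `Fn A`: finite partial functions from `A` to `2` (represented as `Bool`). -/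
def Fn (A : Type*) : Type _ :=
  {p : A → Option Bool // {a | p a ≠ none}.Finite}

/-- `Fn A` ordered by reverse inclusion: `q ≤ p` iff `q` extends `p`. -/
instance Fn.instPartialOrder (A : Type*) : PartialOrder (Fn A) where
  le q p := ∀ a, p.1 a ≠ none → q.1 a = p.1 a
  le_refl p := fun _ _ => rfl
  le_trans r q p hrq hqp := fun a ha => by
    have h1 := hqp a ha
    have h2 := hrq a (h1 ▸ ha)
    rw [h2, h1]
  le_antisymm p q h h' := Subtype.ext <| funext fun a => by
    by_cases hq : q.1 a = none
    · by_cases hp : p.1 a = none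
      · rw [hp, hq]
      · exact (h' a hp).symm
    · exact h a hq

/-- The empty condition is the greatest element of `Fn A`. -/
instance Fn.instOrderTop (A : Type*) : OrderTop (Fn A) where
  top := ⟨fun _ => none, by simp⟩
  le_top p := fun a ha => absurd rfl ha

/-- Martin's axiom for the partial order `P`: any family of fewer than `2^ℵ₀` dense
subsets of `P` admits a generic filter (an upward closed, downward directed subset
meeting all members of the family). -/
def MAP (P : Type*) [PartialOrder P] : Prop :=
  ∀ 𝒟 : Set (Set P), (∀ D ∈ 𝒟, ∀ p : P, ∃ q ∈ D, q ≤ p) → #𝒟 < 2 ^ ℵ₀ →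
    ∃ G : Set P, (∀ p ∈ G, ∀ q, p ≤ q → q ∈ G) ∧
      (∀ p ∈ G, ∀ q ∈ G, ∃ r ∈ G, r ≤ p ∧ r ≤ q) ∧
      ∀ D ∈ 𝒟, (G ∩ D).Nonempty

/-- The cardinal `𝔰𝔱''`. -/
noncomputable def stick'' : Cardinal :=
  sInf {k | aleph 1 ≤ k ∧ ∃ X : Set (Set k.ord.ToType),
    (∀ x ∈ X, #x = ℵ₀) ∧ (∀ y : Set k.ord.ToType, #y = k → ∃ x ∈ X, x ⊆ y) ∧ #X = k}

open Classical in
noncomputable def FnExt {A : Type*} (p : Fn A) (a : A) (b : Bool) : Fn A :=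
  ⟨fun a' => if a' = a then some b else p.1 a', by
    apply Set.Finite.subset (p.2.union (Set.finite_singleton a))
    intro a' ha'
    by_cases hh : a' = a
    · exact Or.inr hh
    · exact Or.inl (by simpa [hh] using ha')⟩

theorem FnExt_self {A : Type*} (p : Fn A) (a : A) (b : Bool) :
    (FnExt p a b).1 a = some b := by simp [FnExt]

theorem FnExt_le {A : Type*} {p : Fn A} {a : A} (hp : p.1 a = none) (b : Bool) :
    FnExt p a b ≤ p := by
  intro a' ha'
  have : a' ≠ a := fun e => ha' (e ▸ hp)
  simp [FnExt, this]

theorem Fn_dense {A : Type*} (p : Fn A) {s : Set A} (hs : s.Infinite) (b : Bool) :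
    ∃ q ≤ p, ∃ a ∈ s, q.1 a = some b := by
  obtain ⟨a, has, hap⟩ := (hs.diff p.2).nonempty
  have hap' : p.1 a = none := by
    by_contra hne; exact hap hne
  exact ⟨FnExt p a b, FnExt_le hap' b, a, has, FnExt_self p a b⟩

theorem not_fam {T : Type u} (k : Cardinal.{u}) (hk : ℵ₀ ≤ k) (hk2 : k < 2 ^ ℵ₀)
    (hT : #T = k) (hMA : MAP (Fn T)) :
    ¬ ∃ X : Set (Set T), (∀ x ∈ X, #x = ℵ₀) ∧
      (∀ y : Set T, #y = k → ∃ x ∈ X, x ⊆ y) ∧ #X = k := by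
  rintro ⟨X, hX1, hX2, hX3⟩
  have hInf : Infinite T := by
    rw [← aleph0_le_mk_iff (α := T), hT]; exact hk
  have hprod : #(T × T) = #T := by
    rw [Cardinal.mk_prod, Cardinal.lift_id, hT, Cardinal.mul_eq_self hk]
  obtain ⟨e⟩ := Cardinal.eq.1 hprod
  -- e : T × T ≃ T
  set D : Set T → Set (Fn T) := fun x => {p | ∃ a ∈ x, p.1 a = some false} with hD
  set E : T → Set (Fn T) := fun α => {p | ∃ β : T, p.1 (e (α, β)) = some true} with hE
  set 𝒟 : Set (Set (Fn T)) := D '' X ∪ Set.range E with h𝒟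
  have hdense : ∀ Ds ∈ 𝒟, ∀ p : Fn T, ∃ q ∈ Ds, q ≤ p := by
    rintro Ds (⟨x, hx, rfl⟩ | ⟨α, rfl⟩) p
    · have hxinf : x.Infinite := by
        rw [← Set.infinite_coe_iff, ← aleph0_le_mk_iff]
        exact (hX1 x hx).symm.le
      obtain ⟨q, hq, a, ha, hqa⟩ := Fn_dense p hxinf false
      exact ⟨q, ⟨a, ha, hqa⟩, hq⟩
    · have hsinf : (Set.range fun β : T => e (α, β)).Infinite :=
        Set.infinite_range_of_injective fun b b' hbb' => by
          have := e.injective hbb'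
          exact (Prod.mk.injEq _ _ _ _ ▸ this).2
      obtain ⟨q, hq, a, ha, hqa⟩ := Fn_dense p hsinf true
      obtain ⟨β, rfl⟩ := ha
      exact ⟨q, ⟨β, hqa⟩, hq⟩
  have hcard : #𝒟 < 2 ^ ℵ₀ := by
    refine lt_of_le_of_lt ?_ hk2
    calc #𝒟 ≤ #(D '' X) + #(Set.range E) := mk_union_le _ _
      _ ≤ #X + #T := add_le_add (mk_image_le) (mk_range_le)
      _ = k := by rw [hX3, hT, Cardinal.add_eq_self hk]
  obtain ⟨G, _, hdir, hgen⟩ := hMA 𝒟 hdense hcard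
  set y : Set T := {a : T | ∃ p ∈ G, p.1 a = some true} with hy
  have hEa : ∀ α : T, ∃ a : T, a ∈ y ∧ ∃ β : T, a = e (α, β) := by
    intro α
    obtain ⟨p, hpG, β, hp⟩ := hgen (E α) (Set.mem_union_right _ ⟨α, rfl⟩)
    exact ⟨e (α, β), ⟨p, hpG, hp⟩, β, rfl⟩
  choose a hay hab using hEa
  choose β hβ using hab
  have hyk : #y = k := by
    refine le_antisymm (hT ▸ mk_set_le y) ?_
    have hinj : Function.Injective (fun α : T => (⟨a α, hay α⟩ : y)) := by
      intro α α' hh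
      have h1 : a α = a α' := congrArg Subtype.val hh
      rw [hβ α, hβ α'] at h1
      exact (Prod.mk.injEq _ _ _ _ ▸ e.injective h1).1
    calc k = #T := hT.symm
      _ ≤ #y := mk_le_of_injective hinj
  obtain ⟨x, hxX, hxy⟩ := hX2 y hyk
  obtain ⟨p, hpG, av, havx, hpav⟩ := hgen (D x) (Set.mem_union_left _ ⟨x, hxX, rfl⟩)
  obtain ⟨q, hqG, hqav⟩ := hxy havx
  obtain ⟨r, hrG, hrp, hrq⟩ := hdir p hpG q hqG
  have h1 : r.1 av = some false := by rw [hrp av (by rw [hpav]; simp)]; exact hpav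
  have h2 : r.1 av = some true := by rw [hrq av (by rw [hqav]; simp)]; exact hqav
  rw [h1] at h2
  simp at h2

theorem fam_continuum {T : Type u} (hT : #T = 2 ^ ℵ₀) :
    ∃ X : Set (Set T), (∀ x ∈ X, #x = ℵ₀) ∧
      (∀ y : Set T, #y = 2 ^ ℵ₀ → ∃ x ∈ X, x ⊆ y) ∧ #X = 2 ^ ℵ₀ := by
  have hInf : Infinite T := by
    rw [← aleph0_le_mk_iff (α := T), hT]; exact (Cardinal.cantor ℵ₀).le
  refine ⟨{x : Set T | #x = ℵ₀}, fun x hx => hx, ?_, ?_⟩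
  · intro y hy
    have : ℵ₀ ≤ #y := by rw [hy]; exact (Cardinal.cantor ℵ₀).le
    obtain ⟨x, hxy, hx⟩ := Cardinal.le_mk_iff_exists_subset.1 this
    exact ⟨x, hx, hxy⟩
  · apply le_antisymm
    · -- inject into ULift ℕ → T
      have hne : ∀ x : {x : Set T | #x = ℵ₀}, Nonempty (ULift.{u} ℕ ≃ x.1) := by
        intro x
        refine Cardinal.eq.1 ?_
        rw [Cardinal.mk_uLift, Cardinal.mk_nat, Cardinal.lift_aleph0]
        exact x.2.symm
      set f : {x : Set T | #x = ℵ₀} → (ULift.{u} ℕ → T) :=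
        fun x n => ((Classical.choice (hne x)) n : T) with hf
      have hrange : ∀ x, Set.range (f x) = x.1 := by
        intro x
        ext t
        constructor
        · rintro ⟨n, rfl⟩; exact ((Classical.choice (hne x)) n).2
        · intro ht
          exact ⟨(Classical.choice (hne x)).symm ⟨t, ht⟩, by simp [hf]⟩
      have hinj : Function.Injective f := by
        intro x x' hxx'
        ext1
        rw [← hrange x, ← hrange x', hxx']
      calc #{x : Set T | #x = ℵ₀} ≤ #(ULift.{u} ℕ → T) := mk_le_of_injective hinj
        _ = #T ^ #(ULift.{u} ℕ) := (Cardinal.power_def _ _).symm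
        _ = (2 ^ ℵ₀) ^ ℵ₀ := by
            rw [hT, Cardinal.mk_uLift, Cardinal.mk_nat, Cardinal.lift_aleph0]
        _ = 2 ^ ℵ₀ := by
            rw [← Cardinal.power_mul, Cardinal.aleph0_mul_aleph0]
    · -- inject complement of a countable set
      have : (ℵ₀ : Cardinal.{u}) ≤ #T := by rw [hT]; exact (Cardinal.cantor ℵ₀).le
      obtain ⟨s0, hs0⟩ := Cardinal.le_mk_iff_exists_set.1 this
      have hs0c : #(↥s0ᶜ) = #T := by
        apply Cardinal.mk_compl_of_infinite
        rw [hs0, hT]; exact Cardinal.cantor ℵ₀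
      set g : ↥s0ᶜ → {x : Set T | #x = ℵ₀} :=
        fun t => ⟨insert t.1 s0, by
          have hts : t.1 ∉ s0 := t.2
          show #(insert t.1 s0 : Set T) = ℵ₀
          rw [Cardinal.mk_insert hts, hs0, Cardinal.add_one_eq le_rfl]⟩ with hg
      have hginj : Function.Injective g := by
        intro t t' htt'
        have h1 : insert t.1 s0 = insert t'.1 s0 := congrArg Subtype.val htt'
        have h2 : t.1 ∈ insert t'.1 s0 := h1 ▸ Set.mem_insert _ _
        rcases h2 with h2 | h2
        · exact Subtype.ext h2
        · exact absurd h2 t.2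
      calc (2 ^ ℵ₀ : Cardinal) = #T := hT.symm
        _ = #(↥s0ᶜ) := hs0c.symm
        _ ≤ #{x : Set T | #x = ℵ₀} := mk_le_of_injective hginj

section transfer
variable {A : Type u} {B : Type v}

noncomputable def FnMap (e : A ≃ B) (p : Fn A) : Fn B :=
  ⟨fun b => p.1 (e.symm b), by
    have : {b | p.1 (e.symm b) ≠ none} = e.symm ⁻¹' {a | p.1 a ≠ none} := rfl
    rw [this]
    exact Set.Finite.preimage (e.symm.injective.injOn) p.2⟩

theorem FnMap_symm_apply (e : A ≃ B) (p : Fn A) :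
    FnMap e.symm (FnMap e p) = p := by
  apply Subtype.ext; funext a; simp [FnMap]

theorem FnMap_apply_symm (e : A ≃ B) (q : Fn B) :
    FnMap e (FnMap e.symm q) = q := by
  apply Subtype.ext; funext b; simp [FnMap]

theorem FnMap_mono (e : A ≃ B) {p p' : Fn A} (hp : p ≤ p') :
    FnMap e p ≤ FnMap e p' := fun b hb => hp (e.symm b) hb

theorem MAP_Fn_transfer (e : A ≃ B) (hA : MAP (Fn A)) : MAP (Fn B) := by
  intro 𝒟 hdense hcard
  set 𝒟' : Set (Set (Fn A)) := (fun D => FnMap e ⁻¹' D) '' 𝒟 with h𝒟'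
  have hdense' : ∀ D ∈ 𝒟', ∀ p : Fn A, ∃ q ∈ D, q ≤ p := by
    rintro _ ⟨D, hD, rfl⟩ p
    obtain ⟨q, hqD, hq⟩ := hdense D hD (FnMap e p)
    refine ⟨FnMap e.symm q, ?_, ?_⟩
    · show FnMap e (FnMap e.symm q) ∈ D
      rw [FnMap_apply_symm]; exact hqD
    · have := FnMap_mono e.symm hq
      rw [FnMap_symm_apply] at this
      exact this
  have hcard' : #𝒟' < 2 ^ ℵ₀ := by
    have hbij : Function.Bijective
        (fun D : 𝒟 => (⟨FnMap e ⁻¹' D.1, D.1, D.2, rfl⟩ : 𝒟')) := by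
      constructor
      · intro D D' hDD'
        apply Subtype.ext
        have h1 : FnMap e ⁻¹' D.1 = FnMap e ⁻¹' D'.1 := congrArg Subtype.val hDD'
        ext q
        constructor
        · intro hq
          have h2 : FnMap e.symm q ∈ FnMap e ⁻¹' D.1 := by
            show FnMap e (FnMap e.symm q) ∈ D.1; rw [FnMap_apply_symm]; exact hq
          rw [h1] at h2
          rw [← FnMap_apply_symm e q]; exact h2
        · intro hq
          have h2 : FnMap e.symm q ∈ FnMap e ⁻¹' D'.1 := by
            show FnMap e (FnMap e.symm q) ∈ D'.1; rw [FnMap_apply_symm]; exact hq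
          rw [← h1] at h2
          rw [← FnMap_apply_symm e q]; exact h2
      · rintro ⟨_, D, hD, rfl⟩
        exact ⟨⟨D, hD⟩, rfl⟩
    have hmk : Cardinal.lift.{u} #𝒟 = Cardinal.lift.{v} #𝒟' :=
      Cardinal.lift_mk_eq'.2 ⟨Equiv.ofBijective _ hbij⟩
    have h1 : Cardinal.lift.{u} #𝒟 < Cardinal.lift.{u} (2 ^ ℵ₀ : Cardinal.{v}) :=
      Cardinal.lift_lt.2 hcard
    rw [hmk] at h1
    have h2 : Cardinal.lift.{u} (2 ^ ℵ₀ : Cardinal.{v})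
        = Cardinal.lift.{v} (2 ^ ℵ₀ : Cardinal.{u}) := by
      rw [two_power_aleph0, two_power_aleph0, lift_continuum, lift_continuum]
    rw [h2] at h1
    exact Cardinal.lift_lt.1 h1
  obtain ⟨G', hup', hdir', hgen'⟩ := hA 𝒟' hdense' hcard'
  refine ⟨{q : Fn B | FnMap e.symm q ∈ G'}, ?_, ?_, ?_⟩
  · intro q hq q' hqq'
    exact hup' (FnMap e.symm q) hq (FnMap e.symm q') (FnMap_mono e.symm hqq')
  · intro q hq q' hq'
    obtain ⟨r', hr'G, hr1, hr2⟩ := hdir' (FnMap e.symm q) hq (FnMap e.symm q') hq'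
    refine ⟨FnMap e r', ?_, ?_, ?_⟩
    · show FnMap e.symm (FnMap e r') ∈ G'
      rw [FnMap_symm_apply]; exact hr'G
    · have := FnMap_mono e hr1
      rw [FnMap_apply_symm] at this
      exact this
    · have := FnMap_mono e hr2
      rw [FnMap_apply_symm] at this
      exact this
  · intro D hD
    obtain ⟨p, hpG, hpD⟩ := hgen' (FnMap e ⁻¹' D) ⟨D, hD, rfl⟩
    refine ⟨FnMap e p, ?_, hpD⟩
    show FnMap e.symm (FnMap e p) ∈ G'
    rw [FnMap_symm_apply]; exact hpG

end transfer

theorem stick''_aux.{u_a, v_a} (h : ∀ κ : Cardinal.{u_a}, MAP (Fn κ.ord.ToType)) :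
    stick''.{v_a} = 2 ^ ℵ₀ := by
  have hmem : (2 ^ ℵ₀ : Cardinal.{v_a}) ∈ {k : Cardinal.{v_a} | aleph 1 ≤ k ∧
      ∃ X : Set (Set k.ord.ToType), (∀ x ∈ X, #x = ℵ₀) ∧
        (∀ y : Set k.ord.ToType, #y = k → ∃ x ∈ X, x ⊆ y) ∧ #X = k} := by
    refine ⟨?_, fam_continuum (mk_ord_toType _)⟩
    exact aleph_one_le_continuum.trans_eq two_power_aleph0.symm
  refine le_antisymm (csInf_le' hmem) (le_csInf ⟨_, hmem⟩ ?_)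
  rintro k ⟨hk1, X, hX1, hX2, hX3⟩
  by_contra hlt
  have hklt : k < 2 ^ ℵ₀ := not_le.1 hlt
  have hklt' : k < Cardinal.lift.{v_a, 0} continuum.{0} := by
    rw [lift_continuum]
    rwa [two_power_aleph0] at hklt
  obtain ⟨k₀, hk₀lt, hk₀⟩ := Cardinal.lt_lift_iff.1 hklt'
  have e : Nonempty ((Cardinal.lift.{u_a, 0} k₀).ord.ToType ≃ k.ord.ToType) := by
    rw [← Cardinal.lift_mk_eq', mk_ord_toType, mk_ord_toType, ← hk₀,
      Cardinal.lift_lift, Cardinal.lift_lift]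
  have hMA : MAP (Fn k.ord.ToType) :=
    MAP_Fn_transfer (Classical.choice e) (h (Cardinal.lift.{u_a, 0} k₀))
  exact not_fam k (le_trans (aleph0_le_aleph 1) hk1) hklt
    (mk_ord_toType k) hMA ⟨X, hX1, hX2, hX3⟩

theorem stick''_eq_continuum_of_MA_Cohen
    (h : ∀ κ : Cardinal, MAP (Fn κ.ord.ToType)) :
    stick'' = 2 ^ ℵ₀ := stick''_aux h
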